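/- Let C_1, ..., C_N ⊆ R^m be closed convex cones contained in a pointed closed convex cone C, let p ∈ R^m and q ∈ (C_1 + ... + C_N) \ {0}. Then sup { λ : p − λq ∈ C_1 + ... + C_N } = inf { ⟨p, v⟩ : v ∈ C_1* ∩ ... ∩ C_N*, ⟨q, v⟩ = 1 }, provided C_1 + ... + C_N is closed. -/

import Mathlib

lemma aux_div (A c : ℝ) (hc : c < 0) : A / -c * c = -A := by
  field_simp
  rw [mul_div_assoc, div_self hc.ne, mul_one]

/-- Sparse conic duality: for closed convex cones `C 1, …, C N` contained in a pointed closed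
convex cone `C`, with `q` a nonzero element of the (closed) Minkowski sum,
`sup {λ : p − λq ∈ C₁ + ⋯ + C_N} = inf {⟨p,v⟩ : v ∈ C₁* ∩ ⋯ ∩ C_N*, ⟨q,v⟩ = 1}`. -/
theorem sparse_conic_duality (m N : ℕ)
    (C : Set (EuclideanSpace ℝ (Fin m)))
    (hconv : Convex ℝ C) (hclosed : IsClosed C)
    (hcone : ∀ c : ℝ, 0 ≤ c → ∀ x ∈ C, c • x ∈ C)
    (hpointed : C ∩ (-C) = {0})
    (Ci : Fin N → Set (EuclideanSpace ℝ (Fin m)))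
    (hconvi : ∀ i, Convex ℝ (Ci i)) (hclosedi : ∀ i, IsClosed (Ci i))
    (hconei : ∀ i, ∀ c : ℝ, 0 ≤ c → ∀ x ∈ Ci i, c • x ∈ Ci i)
    (h0i : ∀ i, (0 : EuclideanSpace ℝ (Fin m)) ∈ Ci i)
    (hsub : ∀ i, Ci i ⊆ C)
    (hsumclosed : IsClosed {x : EuclideanSpace ℝ (Fin m) |
        ∃ f : Fin N → EuclideanSpace ℝ (Fin m), (∀ i, f i ∈ Ci i) ∧ x = ∑ i, f i})
    (p q : EuclideanSpace ℝ (Fin m))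
    (hq : q ∈ {x : EuclideanSpace ℝ (Fin m) |
        ∃ f : Fin N → EuclideanSpace ℝ (Fin m), (∀ i, f i ∈ Ci i) ∧ x = ∑ i, f i})
    (hq0 : q ≠ 0) :
    sSup {lam : ℝ | ∃ f : Fin N → EuclideanSpace ℝ (Fin m),
        (∀ i, f i ∈ Ci i) ∧ p - lam • q = ∑ i, f i}
      = sInf {r : ℝ | ∃ v : EuclideanSpace ℝ (Fin m),
          (∀ i, v ∈ (ProperCone.innerDual (Ci i) : Set (EuclideanSpace ℝ (Fin m)))) ∧
          (inner ℝ q v : ℝ) = 1 ∧ r = (inner ℝ p v : ℝ)} := by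
  classical
  set S : Set (EuclideanSpace ℝ (Fin m)) := {x : (EuclideanSpace ℝ (Fin m)) | ∃ f : Fin N → (EuclideanSpace ℝ (Fin m)), (∀ i, f i ∈ Ci i) ∧ x = ∑ i, f i} with hS
  set Lam : Set ℝ := {lam : ℝ | ∃ f : Fin N → (EuclideanSpace ℝ (Fin m)),
      (∀ i, f i ∈ Ci i) ∧ p - lam • q = ∑ i, f i} with hLam
  set R : Set ℝ := {r : ℝ | ∃ v : (EuclideanSpace ℝ (Fin m)),
      (∀ i, v ∈ (ProperCone.innerDual (Ci i) : Set (EuclideanSpace ℝ (Fin m)))) ∧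
      (inner ℝ q v : ℝ) = 1 ∧ r = (inner ℝ p v : ℝ)} with hR
  -- basic facts
  have h0C : (0 : (EuclideanSpace ℝ (Fin m))) ∈ C := by
    have : (0 : (EuclideanSpace ℝ (Fin m))) ∈ C ∩ (-C) := by rw [hpointed]; exact Set.mem_singleton 0
    exact this.1
  have haddCi : ∀ i, ∀ x ∈ Ci i, ∀ y ∈ Ci i, x + y ∈ Ci i := by
    intro i x hx y hy
    have h := hconvi i hx hy (by norm_num : (0:ℝ) ≤ (1/2:ℝ))
      (by norm_num : (0:ℝ) ≤ (1/2:ℝ)) (by norm_num)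
    have h2 := hconei i 2 (by norm_num) _ h
    convert h2 using 1
    rw [smul_add, smul_smul, smul_smul]
    norm_num
  have haddC : ∀ x ∈ C, ∀ y ∈ C, x + y ∈ C := by
    intro x hx y hy
    have h := hconv hx hy (by norm_num : (0:ℝ) ≤ (1/2:ℝ))
      (by norm_num : (0:ℝ) ≤ (1/2:ℝ)) (by norm_num)
    have h2 := hcone 2 (by norm_num) _ h
    convert h2 using 1
    rw [smul_add, smul_smul, smul_smul]
    norm_num
  have h0S : (0 : (EuclideanSpace ℝ (Fin m))) ∈ S := ⟨fun _ => 0, fun i => h0i i, by simp⟩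
  have hSC : S ⊆ C := by
    rintro x ⟨f, hf, rfl⟩
    exact Finset.sum_induction f (· ∈ C) (fun a b ha hb => haddC a ha b hb) h0C
      (fun i _ => hsub i (hf i))
  have hCiS : ∀ i, Ci i ⊆ S := by
    intro i x hx
    refine ⟨fun j => if j = i then x else 0, ?_, ?_⟩
    · intro j
      by_cases h : j = i
      · subst h; simp [hx]
      · simp [h, h0i j]
    · rw [Finset.sum_ite_eq' Finset.univ i (fun _ => x)]
      simp
  -- S as a convex cone
  let K : ConvexCone ℝ (EuclideanSpace ℝ (Fin m)) :=
    { carrier := S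
      smul_mem' := by
        rintro c hc x ⟨f, hf, rfl⟩
        exact ⟨fun i => c • f i, fun i => hconei i c hc.le _ (hf i), by
          rw [Finset.smul_sum]⟩
      add_mem' := by
        rintro x ⟨f, hf, rfl⟩ y ⟨g, hg, rfl⟩
        exact ⟨fun i => f i + g i, fun i => haddCi i _ (hf i) _ (hg i), by
          rw [Finset.sum_add_distrib]⟩ }
  have hKS : (K : Set (EuclideanSpace ℝ (Fin m))) = S := rfl
  have sep : ∀ b : (EuclideanSpace ℝ (Fin m)), b ∉ S →
      ∃ y : (EuclideanSpace ℝ (Fin m)), (∀ x ∈ S, (0:ℝ) ≤ inner ℝ x y) ∧ (inner ℝ y b : ℝ) < 0 := by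
    intro b hb
    let P : ProperCone ℝ (EuclideanSpace ℝ (Fin m)) :=
      { carrier := S
        add_mem' := fun ha hb => K.add_mem' ha hb
        zero_mem' := h0S
        smul_mem' := fun c x hx => by
          obtain ⟨f, hf, rfl⟩ := hx
          exact ⟨fun i => (c : ℝ) • f i, fun i => hconei i c c.2 _ (hf i), by
            rw [Finset.smul_sum]; rfl⟩
        isClosed' := hsumclosed }
    obtain ⟨y, hy1, hy2⟩ := P.hyperplane_separation' (x₀ := b) (fun h => hb h)
    exact ⟨y, fun x hx => hy1 x hx, by rw [real_inner_comm]; exact hy2⟩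
  have hpt : ∀ x : (EuclideanSpace ℝ (Fin m)), x ∈ S → -x ∈ S → x = 0 := by
    intro x hx hnx
    have h1 : x ∈ C := hSC hx
    have h2 : x ∈ -C := Set.mem_neg.mpr (by simpa using hSC hnx)
    have : x ∈ C ∩ (-C) := ⟨h1, h2⟩
    rwa [hpointed, Set.mem_singleton_iff] at this
  -- dual feasible point v0
  have hqS : q ∈ S := hq
  obtain ⟨v0, hv0S, hv0q⟩ :
      ∃ v : (EuclideanSpace ℝ (Fin m)), (∀ x ∈ S, (0:ℝ) ≤ inner ℝ x v) ∧ (inner ℝ q v : ℝ) = 1 := by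
    have hnq : -q ∉ S := fun h => hq0 (hpt q hqS h)
    obtain ⟨y, hy1, hy2⟩ := sep _ hnq
    have hc : (0:ℝ) < inner ℝ q y := by
      have : (inner ℝ y (-q) : ℝ) = -(inner ℝ q y : ℝ) := by
        rw [inner_neg_right, real_inner_comm]
      linarith [hy2, this ▸ hy2]
    refine ⟨((inner ℝ q y : ℝ))⁻¹ • y, ?_, ?_⟩
    · intro x hx
      rw [real_inner_smul_right]
      exact mul_nonneg (inv_nonneg.mpr hc.le) (hy1 x hx)
    · rw [real_inner_smul_right]
      exact inv_mul_cancel₀ hc.ne'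
  -- membership translations
  have memS_dual : ∀ v : (EuclideanSpace ℝ (Fin m)), (∀ x ∈ S, (0:ℝ) ≤ inner ℝ x v) ↔
      (∀ i, v ∈ (ProperCone.innerDual (Ci i) : Set (EuclideanSpace ℝ (Fin m)))) := by
    intro v
    constructor
    · intro h i
      rw [SetLike.mem_coe, ProperCone.mem_innerDual]
      exact fun x hx => h x (hCiS i hx)
    · rintro h x ⟨f, hf, rfl⟩
      rw [sum_inner]
      refine Finset.sum_nonneg fun i _ => ?_
      have := h i
      rw [SetLike.mem_coe, ProperCone.mem_innerDual] at this
      exact this (hf i)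
  have hv0R : (inner ℝ p v0 : ℝ) ∈ R := ⟨v0, (memS_dual v0).mp hv0S, hv0q, rfl⟩
  -- weak duality
  have weak : ∀ lam ∈ Lam, ∀ v : (EuclideanSpace ℝ (Fin m)), (∀ x ∈ S, (0:ℝ) ≤ inner ℝ x v) →
      (inner ℝ q v : ℝ) = 1 → lam ≤ (inner ℝ p v : ℝ) := by
    rintro lam ⟨f, hf, hfe⟩ v hv hqv
    have hmem : p - lam • q ∈ S := ⟨f, hf, hfe⟩
    have h := hv _ hmem
    rw [inner_sub_left, real_inner_smul_left, hqv] at h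
    linarith
  have weakR : ∀ lam ∈ Lam, ∀ r ∈ R, lam ≤ r := by
    rintro lam hlam r ⟨v, hv, hqv, rfl⟩
    exact weak lam hlam v ((memS_dual v).mpr hv) hqv
  by_cases hne : Lam.Nonempty
  · -- primal feasible case
    have hbddA : BddAbove Lam := ⟨(inner ℝ p v0 : ℝ), fun lam hlam => weak lam hlam v0 hv0S hv0q⟩
    have hLclosed : IsClosed Lam := by
      have : Lam = (fun lam : ℝ => p - lam • q) ⁻¹' S := by
        ext lam
        simp only [hLam, Set.mem_setOf_eq, Set.mem_preimage, hS]
      rw [this]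
      exact hsumclosed.preimage (continuous_const.sub (continuous_id.smul continuous_const))
    set lamS := sSup Lam with hlamS
    have hlamMem : lamS ∈ Lam := hLclosed.csSup_mem hne hbddA
    have hRne : R.Nonempty := ⟨_, hv0R⟩
    have hRbdd : BddBelow R := ⟨lamS, fun r hr => weakR lamS hlamMem r hr⟩
    have hge : lamS ≤ sInf R := le_csInf hRne fun r hr => weakR lamS hlamMem r hr
    have hle : sInf R ≤ lamS := by
      by_contra hcon
      push_neg at hcon
      set ε := sInf R - lamS with hε
      have hεpos : 0 < ε := by simp [hε]; linarith
      have hnm : p - (lamS + ε) • q ∉ S := by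
        intro hmem
        obtain ⟨f, hf, hfe⟩ := hmem
        have : lamS + ε ∈ Lam := ⟨f, hf, hfe⟩
        have := le_csSup hbddA this
        linarith
      obtain ⟨y, hy1, hy2⟩ := sep _ hnm
      have hy2' : (inner ℝ p y : ℝ) < (lamS + ε) * (inner ℝ q y : ℝ) := by
        have : (inner ℝ y (p - (lamS + ε) • q) : ℝ)
            = (inner ℝ p y : ℝ) - (lamS + ε) * (inner ℝ q y : ℝ) := by
          rw [real_inner_comm, inner_sub_left, real_inner_smul_left]
        linarith [this ▸ hy2]
      have hqy : (0:ℝ) ≤ inner ℝ q y := hy1 q hqS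
      rcases lt_or_eq_of_le hqy with hqy | hqy
      · -- normalize y
        set v := ((inner ℝ q y : ℝ))⁻¹ • y with hv
        have hvS : ∀ x ∈ S, (0:ℝ) ≤ inner ℝ x v := by
          intro x hx
          rw [hv, real_inner_smul_right]
          exact mul_nonneg (inv_nonneg.mpr hqy.le) (hy1 x hx)
        have hvq : (inner ℝ q v : ℝ) = 1 := by
          rw [hv, real_inner_smul_right]; exact inv_mul_cancel₀ hqy.ne'
        have hrR : (inner ℝ p v : ℝ) ∈ R := ⟨v, (memS_dual v).mp hvS, hvq, rfl⟩
        have hrlt : (inner ℝ p v : ℝ) < lamS + ε := by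
          rw [hv, real_inner_smul_right]
          rw [inv_mul_lt_iff₀ hqy]
          linarith [hy2']
        have := csInf_le hRbdd hrR
        have : sInf R < lamS + ε := lt_of_le_of_lt this hrlt
        linarith
      · -- inner ℝ q y = 0, drive dual to -infinity: contradiction with weak duality
        have hpy : (inner ℝ p y : ℝ) < 0 := by rw [← hqy] at hy2'; linarith
        have hb0 : lamS ≤ (inner ℝ p v0 : ℝ) := weak lamS hlamMem v0 hv0S hv0q
        set t := ((inner ℝ p v0 : ℝ) - lamS + 1) / (-(inner ℝ p y : ℝ)) with ht
        have htpos : 0 < t := div_pos (by linarith) (by linarith)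
        set v := v0 + t • y with hv
        have hvS : ∀ x ∈ S, (0:ℝ) ≤ inner ℝ x v := by
          intro x hx
          rw [hv, inner_add_right, real_inner_smul_right]
          exact add_nonneg (hv0S x hx) (mul_nonneg htpos.le (hy1 x hx))
        have hvq : (inner ℝ q v : ℝ) = 1 := by
          rw [hv, inner_add_right, real_inner_smul_right, hv0q, ← hqy]
          ring
        have hval : (inner ℝ p v : ℝ) = lamS - 1 := by
          rw [hv, inner_add_right, real_inner_smul_right, ht, aux_div _ _ hpy]
          ring
        have := weak lamS hlamMem v hvS hvq
        rw [hval] at this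
        linarith
    linarith
  · -- primal infeasible case
    have hLam0 : Lam = ∅ := Set.not_nonempty_iff_eq_empty.mp hne
    rw [hLam0, Real.sSup_empty]
    have hnb : ¬ BddBelow R := by
      rintro ⟨b, hb⟩
      have hnm : p - b • q ∉ S := by
        intro hmem
        obtain ⟨f, hf, hfe⟩ := hmem
        exact hne ⟨b, f, hf, hfe⟩
      obtain ⟨y, hy1, hy2⟩ := sep _ hnm
      have hy2' : (inner ℝ p y : ℝ) < b * (inner ℝ q y : ℝ) := by
        have : (inner ℝ y (p - b • q) : ℝ)
            = (inner ℝ p y : ℝ) - b * (inner ℝ q y : ℝ) := by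
          rw [real_inner_comm, inner_sub_left, real_inner_smul_left]
        linarith [this ▸ hy2]
      have hqy : (0:ℝ) ≤ inner ℝ q y := hy1 q hqS
      rcases lt_or_eq_of_le hqy with hqy | hqy
      · set v := ((inner ℝ q y : ℝ))⁻¹ • y with hv
        have hvS : ∀ x ∈ S, (0:ℝ) ≤ inner ℝ x v := by
          intro x hx
          rw [hv, real_inner_smul_right]
          exact mul_nonneg (inv_nonneg.mpr hqy.le) (hy1 x hx)
        have hvq : (inner ℝ q v : ℝ) = 1 := by
          rw [hv, real_inner_smul_right]; exact inv_mul_cancel₀ hqy.ne'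
        have hrR : (inner ℝ p v : ℝ) ∈ R := ⟨v, (memS_dual v).mp hvS, hvq, rfl⟩
        have hrlt : (inner ℝ p v : ℝ) < b := by
          rw [hv, real_inner_smul_right, inv_mul_lt_iff₀ hqy]
          linarith [hy2']
        have := hb hrR
        linarith
      · have hpy : (inner ℝ p y : ℝ) < 0 := by rw [← hqy] at hy2'; linarith
        have hb0 : b ≤ (inner ℝ p v0 : ℝ) := hb hv0R
        set t := ((inner ℝ p v0 : ℝ) - b + 1) / (-(inner ℝ p y : ℝ)) with ht
        have htpos : 0 < t := div_pos (by linarith) (by linarith)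
        set v := v0 + t • y with hv
        have hvS : ∀ x ∈ S, (0:ℝ) ≤ inner ℝ x v := by
          intro x hx
          rw [hv, inner_add_right, real_inner_smul_right]
          exact add_nonneg (hv0S x hx) (mul_nonneg htpos.le (hy1 x hx))
        have hvq : (inner ℝ q v : ℝ) = 1 := by
          rw [hv, inner_add_right, real_inner_smul_right, hv0q, ← hqy]
          ring
        have hval : (inner ℝ p v : ℝ) = b - 1 := by
          rw [hv, inner_add_right, real_inner_smul_right, ht, aux_div _ _ hpy]
          ring
        have hrR : (inner ℝ p v : ℝ) ∈ R := ⟨v, (memS_dual v).mp hvS, hvq, rfl⟩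
        have := hb hrR
        rw [hval] at this
        linarith
    rw [Real.sInf_of_not_bddBelow hnb]
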